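/- arXiv:1406.3503 — 4 statements merged into one kernel-verified Lean document; each statement's English description precedes it below -/
import Mathlib

section
/- Every subgroup of PGL_4(k) (k algebraically closed of characteristic zero) isomorphic to (Z/3Z)³ is conjugate to the group G_27 generated by the classes of diag[ω,1,1,1], diag[1,ω,1,1] and diag[1,1,ω,1], where ω is a primitive third root of unity. -/
open Matrix

namespace Stmt2Aux

variable {k : Type*} [Field k]

/-- scalar unit matrix -/
def scalarU (c : kˣ) : GL (Fin 4) k := Units.map (Matrix.scalar (Fin 4)).toMonoidHom c

lemma scalarU_val (c : kˣ) :
    ((scalarU c : GL (Fin 4) k) : Matrix (Fin 4) (Fin 4) k) = Matrix.scalar (Fin 4) (c : k) := rfl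

lemma scalarU_mem_center (c : kˣ) :
    scalarU c ∈ Subgroup.center (GL (Fin 4) k) := by
  rw [Subgroup.mem_center_iff]
  intro g
  apply Units.ext
  show (g : Matrix (Fin 4) (Fin 4) k) * Matrix.scalar (Fin 4) (c : k)
      = Matrix.scalar (Fin 4) (c : k) * (g : Matrix (Fin 4) (Fin 4) k)
  exact (Matrix.scalar_commute (c : k) (fun r => Commute.all _ _) _).symm

lemma center_is_scalar {u : GL (Fin 4) k} (hu : u ∈ Subgroup.center (GL (Fin 4) k)) :
    ∃ c : kˣ, u = scalarU c := by
  have hcomm : ∀ t : Matrix.TransvectionStruct (Fin 4) k,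
      Commute t.toMatrix (u : Matrix (Fin 4) (Fin 4) k) := by
    intro t
    have h := Subgroup.mem_center_iff.mp hu ⟨t.toMatrix, t.inv.toMatrix, t.mul_inv, t.inv_mul⟩
    exact congrArg Units.val h
  obtain ⟨c, hc⟩ := Matrix.mem_range_scalar_of_commute_transvectionStruct hcomm
  have hc0 : c ≠ 0 := by
    intro h0
    have h1 : (u : Matrix (Fin 4) (Fin 4) k) * ((u⁻¹ : GL (Fin 4) k) : Matrix (Fin 4) (Fin 4) k)
        = 1 := u.mul_inv
    rw [← hc, h0, map_zero, zero_mul] at h1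
    exact one_ne_zero h1.symm
  refine ⟨Units.mk0 c hc0, ?_⟩
  apply Units.ext
  rw [scalarU_val]
  exact hc.symm

variable (ω : k)

lemma omega_quad (hω3 : ω ^ 3 = 1) (hω1 : ω ≠ 1) : ω ^ 2 + ω + 1 = 0 := by
  have h : (ω - 1) * (ω ^ 2 + ω + 1) = 0 := by linear_combination hω3
  rcases mul_eq_zero.mp h with h1 | h2
  · exact absurd (sub_eq_zero.mp h1) hω1
  · exact h2

lemma cube_root_cases (hω3 : ω ^ 3 = 1) (hω1 : ω ≠ 1) {ζ : k} (h : ζ ^ 3 = 1) :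
    ∃ e : ℕ, ζ = ω ^ e := by
  have hq := omega_quad ω hω3 hω1
  have key : (ζ - 1) * (ζ - ω) * (ζ - ω ^ 2) = 0 := by
    linear_combination h + (ζ - ζ ^ 2) * hq + (ζ - 1) * hω3
  rcases mul_eq_zero.mp key with h' | h3
  · rcases mul_eq_zero.mp h' with h1 | h2
    · exact ⟨0, by rw [pow_zero]; exact sub_eq_zero.mp h1⟩
    · exact ⟨1, by rw [pow_one]; exact sub_eq_zero.mp h2⟩
  · exact ⟨2, sub_eq_zero.mp h3⟩

variable {ω}

section Quot

local notation "π" => QuotientGroup.mk' (Subgroup.center (GL (Fin 4) k))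

lemma pi_scalarU (c : kˣ) : π (scalarU c : GL (Fin 4) k) = 1 :=
  (QuotientGroup.eq_one_iff _).mpr (scalarU_mem_center c)

lemma lifts_commute (A B : GL (Fin 4) k) (hA : A ^ 3 = 1) (hB : B ^ 3 = 1)
    (h : π A * π B = π B * π A) : A * B = B * A := by
  set z := A * B * A⁻¹ * B⁻¹ with hz
  have hzc : z ∈ Subgroup.center (GL (Fin 4) k) := by
    rw [← QuotientGroup.eq_one_iff]
    show (QuotientGroup.mk' _) z = 1
    rw [hz]
    simp only [_root_.map_mul, map_inv]
    rw [h]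
    group
  obtain ⟨c, hcz⟩ := center_is_scalar hzc
  have hABA : A * B * A⁻¹ = z * B := by rw [hz]; group
  have hcom : ∀ g : GL (Fin 4) k, g * z = z * g := Subgroup.mem_center_iff.mp hzc
  have hz3 : z ^ 3 = 1 := by
    have h1 : (MulAut.conj A) (B ^ 3) = ((MulAut.conj A) B) ^ 3 := map_pow _ _ _
    rw [hB, _root_.map_one] at h1; rw [MulAut.conj_apply, hABA] at h1
    have hzB : Commute z B := (hcom B).symm
    have h2 : (z * B) ^ 3 = z ^ 3 * B ^ 3 := hzB.mul_pow 3
    rw [h2, hB, mul_one] at h1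
    exact h1.symm
  have hdet : (c : k) ^ 4 = 1 := by
    have hA' : ((A : Matrix (Fin 4) (Fin 4) k)).det
        * (((A⁻¹ : GL (Fin 4) k) : Matrix (Fin 4) (Fin 4) k)).det = 1 := by
      rw [← Matrix.det_mul,
        show ((A : Matrix (Fin 4) (Fin 4) k))
          * (((A⁻¹ : GL (Fin 4) k)) : Matrix (Fin 4) (Fin 4) k) = 1 from A.mul_inv]
      exact Matrix.det_one
    have hB' : ((B : Matrix (Fin 4) (Fin 4) k)).det
        * (((B⁻¹ : GL (Fin 4) k) : Matrix (Fin 4) (Fin 4) k)).det = 1 := by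
      rw [← Matrix.det_mul,
        show ((B : Matrix (Fin 4) (Fin 4) k))
          * (((B⁻¹ : GL (Fin 4) k)) : Matrix (Fin 4) (Fin 4) k) = 1 from B.mul_inv]
      exact Matrix.det_one
    have h1 : ((z : GL (Fin 4) k) : Matrix (Fin 4) (Fin 4) k).det = 1 := by
      rw [hz]
      simp only [Units.val_mul]
      rw [Matrix.det_mul, Matrix.det_mul, Matrix.det_mul]
      calc (A : Matrix (Fin 4) (Fin 4) k).det * (B : Matrix (Fin 4) (Fin 4) k).det
            * ((A⁻¹ : GL (Fin 4) k) : Matrix (Fin 4) (Fin 4) k).det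
            * ((B⁻¹ : GL (Fin 4) k) : Matrix (Fin 4) (Fin 4) k).det
          = ((A : Matrix (Fin 4) (Fin 4) k).det
              * ((A⁻¹ : GL (Fin 4) k) : Matrix (Fin 4) (Fin 4) k).det)
            * ((B : Matrix (Fin 4) (Fin 4) k).det
              * ((B⁻¹ : GL (Fin 4) k) : Matrix (Fin 4) (Fin 4) k).det) := by ring
        _ = 1 := by rw [hA', hB', mul_one]
    rw [hcz, scalarU_val, Matrix.scalar_apply, Matrix.det_diagonal] at h1
    simpa [Finset.prod_const] using h1
  have hz4 : z ^ 4 = 1 := by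
    rw [hcz]
    have h4 : (scalarU c : GL (Fin 4) k) ^ 4 = scalarU (c ^ 4) := (map_pow _ _ _).symm
    rw [h4]
    have hc4 : c ^ 4 = 1 := Units.ext (by simpa using hdet)
    rw [hc4]
    exact _root_.map_one _
  have hz1 : z = 1 := by
    have h5 : z ^ 4 = z ^ 3 * z := pow_succ z 3
    rw [hz3, one_mul, hz4] at h5
    exact h5.symm
  rw [hz] at hz1
  have := congrArg (fun w => w * B * A) hz1
  simpa [mul_assoc] using this


variable [IsAlgClosed k]

lemma exists_lift (x : GL (Fin 4) k ⧸ Subgroup.center (GL (Fin 4) k)) (hx : x ^ 3 = 1) :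
    ∃ A : GL (Fin 4) k, π A = x ∧ A ^ 3 = 1 := by
  obtain ⟨B, hB⟩ := QuotientGroup.mk'_surjective (Subgroup.center (GL (Fin 4) k)) x
  have h3 : B ^ 3 ∈ Subgroup.center (GL (Fin 4) k) := by
    rw [← QuotientGroup.eq_one_iff]
    show (QuotientGroup.mk' _) (B ^ 3) = 1
    rw [map_pow, hB, hx]
  obtain ⟨c, hc⟩ := center_is_scalar h3
  obtain ⟨lam, hlam⟩ := IsAlgClosed.exists_pow_nat_eq (c : k) (n := 3) (by norm_num)
  have hlam0 : lam ≠ 0 := by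
    intro h0
    rw [h0] at hlam
    exact c.ne_zero (by simpa using hlam.symm)
  set lu : kˣ := Units.mk0 lam hlam0 with hlu
  have hlu3 : lu ^ 3 = c := Units.ext (by simpa [hlu] using hlam)
  refine ⟨(scalarU lu)⁻¹ * B, ?_, ?_⟩
  · rw [_root_.map_mul, map_inv, pi_scalarU, inv_one, one_mul, hB]
  · have hcent : Commute ((scalarU lu)⁻¹ : GL (Fin 4) k) B :=
      (Subgroup.mem_center_iff.mp (Subgroup.inv_mem _ (scalarU_mem_center lu)) B).symm
    rw [hcent.mul_pow 3, inv_pow,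
      show (scalarU lu : GL (Fin 4) k) ^ 3 = scalarU (lu ^ 3) from (map_pow _ _ _).symm,
      hlu3, ← hc, inv_mul_cancel]

end Quot

section Diag

variable (ω : k)

/-- spectral projector ingredient -/
def q (lam : k) (M : Matrix (Fin 4) (Fin 4) k) : Matrix (Fin 4) (Fin 4) k :=
  (3 : k)⁻¹ • (lam • (M * M) + (lam ^ 2) • M + 1)

variable [CharZero k]

lemma q_eigen {lam : k} {M : Matrix (Fin 4) (Fin 4) k} (hlam : lam ^ 3 = 1) (hM : M ^ 3 = 1) :
    M * q lam M = lam • q lam M := by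
  unfold q
  rw [Matrix.mul_smul, smul_comm lam ((3 : k)⁻¹)]
  congr 1
  have h3 : M * (M * M) = 1 := by
    rw [← pow_two, ← pow_succ']
    exact hM
  rw [mul_add, mul_add, mul_one, Matrix.mul_smul, Matrix.mul_smul, h3]
  rw [smul_add, smul_add, smul_smul, smul_smul, ← pow_two,
    show lam * lam ^ 2 = 1 by rw [show lam * lam ^ 2 = lam ^ 3 by ring]; exact hlam, one_smul,
    show lam * lam = lam ^ 2 by ring]
  abel

lemma q_commute {N M : Matrix (Fin 4) (Fin 4) k} (h : Commute N M) (lam : k) :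
    N * q lam M = q lam M * N := by
  unfold q
  rw [Matrix.mul_smul, Matrix.smul_mul]
  congr 1
  rw [mul_add, mul_add, add_mul, add_mul, mul_one, one_mul, Matrix.mul_smul, Matrix.mul_smul,
    Matrix.smul_mul, Matrix.smul_mul, h.eq, (h.mul_right h).eq]

lemma q_sum (M : Matrix (Fin 4) (Fin 4) k) (hω3 : ω ^ 3 = 1) (hω1 : ω ≠ 1) :
    q 1 M + q ω M + q (ω ^ 2) M = 1 := by
  have hq := omega_quad ω hω3 hω1
  have h3 : (3 : k) ≠ 0 := by norm_num
  unfold q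
  ext i j
  simp only [Matrix.add_apply, Matrix.smul_apply, smul_eq_mul]
  field_simp
  linear_combination ((M * M) i j + M i j) * hq + M i j * ω * hω3

lemma simul_diag (hω3 : ω ^ 3 = 1) (hω1 : ω ≠ 1)
    (A : Fin 3 → Matrix (Fin 4) (Fin 4) k)
    (hcomm : ∀ i j, A i * A j = A j * A i)
    (hcube : ∀ i, A i ^ 3 = 1) :
    ∃ (P : Matrix (Fin 4) (Fin 4) k) (_ : Invertible P) (d : Fin 3 → Fin 4 → k),
      (∀ i j, d i j ^ 3 = 1) ∧ ∀ i, A i * P = P * Matrix.diagonal (d i) := by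
  classical
  set ρ : Fin 3 → k := ![1, ω, ω ^ 2] with hρdef
  have hρ : ∀ r, ρ r ^ 3 = 1 := by
    intro r
    fin_cases r
    · simp [hρdef]
    · simpa [hρdef] using hω3
    · show (ω ^ 2) ^ 3 = 1
      calc (ω ^ 2) ^ 3 = (ω ^ 3) ^ 2 := by ring
        _ = 1 := by rw [hω3]; ring
  set E : Fin 3 × Fin 3 × Fin 3 → Matrix (Fin 4) (Fin 4) k :=
    fun t => q (ρ t.1) (A 0) * (q (ρ t.2.1) (A 1) * q (ρ t.2.2) (A 2)) with hEdef
  have hq1 : ∀ i : Fin 3, q (ρ 0) (A i) + q (ρ 1) (A i) + q (ρ 2) (A i) = 1 := by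
    intro i
    have h := q_sum ω (A i) hω3 hω1
    simpa [hρdef] using h
  have hsumE : ∑ t : Fin 3 × Fin 3 × Fin 3, E t = 1 := by
    rw [Fintype.sum_prod_type]
    have inner2 : ∀ b : Fin 3, ∑ c : Fin 3, q (ρ b) (A 1) * q (ρ c) (A 2) = q (ρ b) (A 1) := by
      intro b
      rw [← Finset.mul_sum, Fin.sum_univ_three, hq1 2, mul_one]
    have inner1 : ∀ a : Fin 3, ∑ y : Fin 3 × Fin 3, E (a, y) = q (ρ a) (A 0) := by
      intro a
      rw [Fintype.sum_prod_type]
      calc ∑ b : Fin 3, ∑ c : Fin 3, q (ρ a) (A 0) * (q (ρ b) (A 1) * q (ρ c) (A 2))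
          = ∑ b : Fin 3, q (ρ a) (A 0) * ∑ c : Fin 3, q (ρ b) (A 1) * q (ρ c) (A 2) := by
            refine Finset.sum_congr rfl fun b _ => ?_
            rw [Finset.mul_sum]
        _ = ∑ b : Fin 3, q (ρ a) (A 0) * q (ρ b) (A 1) := by
            refine Finset.sum_congr rfl fun b _ => ?_
            rw [inner2 b]
        _ = q (ρ a) (A 0) * ∑ b : Fin 3, q (ρ b) (A 1) := by rw [Finset.mul_sum]
        _ = q (ρ a) (A 0) := by rw [Fin.sum_univ_three, hq1 1, mul_one]
    calc ∑ a : Fin 3, ∑ y : Fin 3 × Fin 3, E (a, y) = ∑ a : Fin 3, q (ρ a) (A 0) :=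
          Finset.sum_congr rfl fun a _ => inner1 a
      _ = 1 := by rw [Fin.sum_univ_three, hq1 0]
  have hAE : ∀ (i : Fin 3) (t : Fin 3 × Fin 3 × Fin 3),
      ∃ lam : k, lam ^ 3 = 1 ∧ A i * E t = lam • E t := by
    rintro i ⟨a, b, c⟩
    fin_cases i
    · refine ⟨ρ a, hρ a, ?_⟩
      show A 0 * (q (ρ a) (A 0) * (q (ρ b) (A 1) * q (ρ c) (A 2)))
          = ρ a • (q (ρ a) (A 0) * (q (ρ b) (A 1) * q (ρ c) (A 2)))
      rw [← mul_assoc, q_eigen (hρ a) (hcube 0), Matrix.smul_mul]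
    · refine ⟨ρ b, hρ b, ?_⟩
      show A 1 * (q (ρ a) (A 0) * (q (ρ b) (A 1) * q (ρ c) (A 2)))
          = ρ b • (q (ρ a) (A 0) * (q (ρ b) (A 1) * q (ρ c) (A 2)))
      have hc10 : Commute (A 1) (A 0) := hcomm 1 0
      calc A 1 * (q (ρ a) (A 0) * (q (ρ b) (A 1) * q (ρ c) (A 2)))
          = (A 1 * q (ρ a) (A 0)) * (q (ρ b) (A 1) * q (ρ c) (A 2)) := by rw [mul_assoc]
        _ = (q (ρ a) (A 0) * A 1) * (q (ρ b) (A 1) * q (ρ c) (A 2)) := by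
            rw [q_commute hc10]
        _ = q (ρ a) (A 0) * ((A 1 * q (ρ b) (A 1)) * q (ρ c) (A 2)) := by
            rw [mul_assoc, ← mul_assoc (A 1)]
        _ = q (ρ a) (A 0) * ((ρ b • q (ρ b) (A 1)) * q (ρ c) (A 2)) := by
            rw [q_eigen (hρ b) (hcube 1)]
        _ = ρ b • (q (ρ a) (A 0) * (q (ρ b) (A 1) * q (ρ c) (A 2))) := by
            rw [Matrix.smul_mul, Matrix.mul_smul]
    · refine ⟨ρ c, hρ c, ?_⟩
      show A 2 * (q (ρ a) (A 0) * (q (ρ b) (A 1) * q (ρ c) (A 2)))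
          = ρ c • (q (ρ a) (A 0) * (q (ρ b) (A 1) * q (ρ c) (A 2)))
      have hc20 : Commute (A 2) (A 0) := hcomm 2 0
      have hc21 : Commute (A 2) (A 1) := hcomm 2 1
      calc A 2 * (q (ρ a) (A 0) * (q (ρ b) (A 1) * q (ρ c) (A 2)))
          = (A 2 * q (ρ a) (A 0)) * (q (ρ b) (A 1) * q (ρ c) (A 2)) := by rw [mul_assoc]
        _ = q (ρ a) (A 0) * (A 2 * (q (ρ b) (A 1) * q (ρ c) (A 2))) := by
            rw [q_commute hc20, mul_assoc]
        _ = q (ρ a) (A 0) * ((A 2 * q (ρ b) (A 1)) * q (ρ c) (A 2)) := by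
            rw [← mul_assoc (A 2)]
        _ = q (ρ a) (A 0) * (q (ρ b) (A 1) * (A 2 * q (ρ c) (A 2))) := by
            rw [q_commute hc21, mul_assoc]
        _ = q (ρ a) (A 0) * (q (ρ b) (A 1) * (ρ c • q (ρ c) (A 2))) := by
            rw [q_eigen (hρ c) (hcube 2)]
        _ = ρ c • (q (ρ a) (A 0) * (q (ρ b) (A 1) * q (ρ c) (A 2))) := by
            rw [Matrix.mul_smul, Matrix.mul_smul]
  set T : Set (Fin 4 → k) :=
    {v | ∀ i : Fin 3, ∃ lam : k, lam ^ 3 = 1 ∧ (A i).mulVec v = lam • v} with hTdef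
  have hTtop : Submodule.span k T = ⊤ := by
    rw [eq_top_iff]
    intro v _
    have hφ := map_sum (AddMonoidHom.mk' (fun M : Matrix (Fin 4) (Fin 4) k => M.mulVec v)
      (fun X Y => Matrix.add_mulVec X Y v)) E Finset.univ
    rw [hsumE] at hφ
    simp only [AddMonoidHom.mk'_apply, Matrix.one_mulVec] at hφ
    rw [hφ]
    refine Submodule.sum_mem _ fun t _ => Submodule.subset_span ?_
    intro i
    obtain ⟨lam, hlam1, hlam2⟩ := hAE i t
    refine ⟨lam, hlam1, ?_⟩
    rw [Matrix.mulVec_mulVec, hlam2, Matrix.smul_mulVec]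
  obtain ⟨s, hsub, hsp, hli⟩ := exists_linearIndependent k T
  let b : Module.Basis s k (Fin 4 → k) := Module.Basis.mk hli (by rw [Subtype.range_val, hsp, hTtop])
  let eqv := b.indexEquiv (Pi.basisFun k (Fin 4))
  let cB := b.reindex eqv
  have hcT : ∀ j, (cB j : Fin 4 → k) ∈ T := by
    intro j
    have h1 : cB j = b (eqv.symm j) := Module.Basis.reindex_apply b eqv j
    have h2 : b (eqv.symm j) = ((eqv.symm j : s) : Fin 4 → k) := Module.Basis.mk_apply hli _ _
    rw [h1, h2]
    exact hsub (eqv.symm j).2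
  set P := (Pi.basisFun k (Fin 4)).toMatrix ⇑cB with hP
  have hinv : Invertible P := (Pi.basisFun k (Fin 4)).invertibleToMatrix cB
  refine ⟨P, hinv, fun i j => (hcT j i).choose, fun i j => (hcT j i).choose_spec.1, ?_⟩
  intro i
  ext x y
  have hPe : ∀ z w, P z w = cB w z := by
    intro z w
    rw [hP, Module.Basis.toMatrix_apply, Pi.basisFun_repr]
  rw [Matrix.mul_diagonal, Matrix.mul_apply]
  have hspec := (hcT y i).choose_spec.2
  calc ∑ z, A i x z * P z y = ∑ z, A i x z * (cB y : Fin 4 → k) z :=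
        Finset.sum_congr rfl fun z _ => by rw [hPe z y]
    _ = ((A i).mulVec (cB y)) x := rfl
    _ = ((hcT y i).choose • (cB y : Fin 4 → k)) x := congrFun hspec x
    _ = P x y * (hcT y i).choose := by
        rw [Pi.smul_apply, smul_eq_mul, hPe x y, mul_comm]

end Diag


section CardClosure

variable {H : Type*} [Group H]

lemma triple_mul {a b c : H} (cab : Commute a b) (cac : Commute a c) (cbc : Commute b c)
    (i j l i' j' l' : ℕ) :
    a ^ i * b ^ j * c ^ l * (a ^ i' * b ^ j' * c ^ l')
      = a ^ (i + i') * b ^ (j + j') * c ^ (l + l') := by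
  have e1 : Commute (c ^ l) (a ^ i') := cac.symm.pow_pow l i'
  have e2 : Commute (b ^ j) (a ^ i') := cab.symm.pow_pow j i'
  have e3 : Commute (c ^ l) (b ^ j') := cbc.symm.pow_pow l j'
  rw [pow_add, pow_add, pow_add]
  simp only [mul_assoc]
  rw [← mul_assoc (c ^ l) (a ^ i'), e1.eq, mul_assoc (a ^ i')]
  rw [← mul_assoc (b ^ j) (a ^ i'), e2.eq, mul_assoc (a ^ i')]
  rw [← mul_assoc (c ^ l) (b ^ j'), e3.eq, mul_assoc (b ^ j')]

lemma mem_closure_triple {a b c : H} (cab : Commute a b) (cac : Commute a c) (cbc : Commute b c)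
    (ha : a ^ 3 = 1) (hb : b ^ 3 = 1) (hc : c ^ 3 = 1)
    {x : H} (hx : x ∈ Subgroup.closure ({a, b, c} : Set H)) :
    ∃ i j l : ℕ, x = a ^ i * b ^ j * c ^ l := by
  refine Subgroup.closure_induction ?_ ?_ ?_ ?_ hx
  · rintro x hx
    rcases hx with rfl | rfl | rfl
    · exact ⟨1, 0, 0, by simp⟩
    · exact ⟨0, 1, 0, by simp⟩
    · exact ⟨0, 0, 1, by simp⟩
  · exact ⟨0, 0, 0, by simp⟩
  · rintro x y _ _ ⟨i, j, l, rfl⟩ ⟨i', j', l', rfl⟩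
    exact ⟨i + i', j + j', l + l', triple_mul cab cac cbc i j l i' j' l'⟩
  · rintro x _ ⟨i, j, l, rfl⟩
    refine ⟨2 * i, 2 * j, 2 * l, ?_⟩
    apply inv_eq_of_mul_eq_one_left
    rw [triple_mul cab cac cbc _ _ _ i j l,
      show 2 * i + i = 3 * i by ring, show 2 * j + j = 3 * j by ring,
      show 2 * l + l = 3 * l by ring, pow_mul, pow_mul, pow_mul, ha, hb, hc,
      one_pow, one_pow, one_pow, mul_one, mul_one]

lemma card_closure_triple {a b c : H} (cab : Commute a b) (cac : Commute a c)
    (cbc : Commute b c) (ha : a ^ 3 = 1) (hb : b ^ 3 = 1) (hc : c ^ 3 = 1) :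
    Finite (Subgroup.closure ({a, b, c} : Set H))
      ∧ Nat.card (Subgroup.closure ({a, b, c} : Set H)) ≤ 27 := by
  have hmem : ∀ i j l : ℕ, a ^ i * b ^ j * c ^ l ∈ Subgroup.closure ({a, b, c} : Set H) := by
    intro i j l
    have ha' : a ∈ Subgroup.closure ({a, b, c} : Set H) :=
      Subgroup.subset_closure (by simp)
    have hb' : b ∈ Subgroup.closure ({a, b, c} : Set H) :=
      Subgroup.subset_closure (by simp)
    have hc' : c ∈ Subgroup.closure ({a, b, c} : Set H) :=
      Subgroup.subset_closure (by simp)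
    exact mul_mem (mul_mem (pow_mem ha' i) (pow_mem hb' j)) (pow_mem hc' l)
  let f : Fin 3 × Fin 3 × Fin 3 → Subgroup.closure ({a, b, c} : Set H) :=
    fun t => ⟨a ^ (t.1 : ℕ) * b ^ (t.2.1 : ℕ) * c ^ (t.2.2 : ℕ), hmem _ _ _⟩
  have hf : Function.Surjective f := by
    rintro ⟨x, hx⟩
    obtain ⟨i, j, l, rfl⟩ := mem_closure_triple cab cac cbc ha hb hc hx
    refine ⟨(⟨i % 3, Nat.mod_lt _ (by norm_num)⟩, ⟨j % 3, Nat.mod_lt _ (by norm_num)⟩,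
      ⟨l % 3, Nat.mod_lt _ (by norm_num)⟩), ?_⟩
    apply Subtype.ext
    show a ^ (i % 3) * b ^ (j % 3) * c ^ (l % 3) = a ^ i * b ^ j * c ^ l
    rw [← pow_eq_pow_mod i ha, ← pow_eq_pow_mod j hb, ← pow_eq_pow_mod l hc]
  constructor
  · exact Finite.of_surjective f hf
  · have := Nat.card_le_card_of_surjective f hf
    simpa using this

end CardClosure


section DiagMem

variable (ω : k)

lemma diag_mem (hω3 : ω ^ 3 = 1) (hω1 : ω ≠ 1)
    (d1 d2 d3 : GL (Fin 4) k)
    (hd1 : (d1 : Matrix (Fin 4) (Fin 4) k) = Matrix.diagonal ![ω, 1, 1, 1])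
    (hd2 : (d2 : Matrix (Fin 4) (Fin 4) k) = Matrix.diagonal ![1, ω, 1, 1])
    (hd3 : (d3 : Matrix (Fin 4) (Fin 4) k) = Matrix.diagonal ![1, 1, ω, 1])
    (u : GL (Fin 4) k) (v : Fin 4 → k) (hv : ∀ j, v j ^ 3 = 1)
    (hu : (u : Matrix (Fin 4) (Fin 4) k) = Matrix.diagonal v) :
    QuotientGroup.mk' (Subgroup.center (GL (Fin 4) k)) u ∈
      Subgroup.closure ({QuotientGroup.mk' (Subgroup.center (GL (Fin 4) k)) d1,
        QuotientGroup.mk' (Subgroup.center (GL (Fin 4) k)) d2,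
        QuotientGroup.mk' (Subgroup.center (GL (Fin 4) k)) d3} :
          Set (GL (Fin 4) k ⧸ Subgroup.center (GL (Fin 4) k))) := by
  have hω0 : ω ≠ 0 := by
    intro h
    rw [h] at hω3
    norm_num at hω3
  have key : ∀ m n : ℕ, ω ^ (m + 3 * n) = ω ^ m := by
    intro m n
    rw [pow_add, pow_mul, hω3, one_pow, mul_one]
  set e : Fin 4 → ℕ := fun j => (cube_root_cases ω hω3 hω1 (hv j)).choose with hedef
  have he : ∀ j, v j = ω ^ e j := fun j => (cube_root_cases ω hω3 hω1 (hv j)).choose_spec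
  set ωu : kˣ := Units.mk0 ω hω0 with hωu
  set z : GL (Fin 4) k := scalarU (ωu ^ e 3) with hzdef
  set a := e 0 + 2 * e 3 with hadef
  set b := e 1 + 2 * e 3 with hbdef
  set c := e 2 + 2 * e 3 with hcdef
  set w : GL (Fin 4) k := d1 ^ a * d2 ^ b * d3 ^ c with hwdef
  have hw : (w : Matrix (Fin 4) (Fin 4) k)
      = Matrix.diagonal (fun i => (![ω, 1, 1, 1] i) ^ a * (![1, ω, 1, 1] i) ^ b
          * (![1, 1, ω, 1] i) ^ c) := by
    rw [hwdef, Units.val_mul, Units.val_mul, Units.val_pow_eq_pow_val,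
      Units.val_pow_eq_pow_val, Units.val_pow_eq_pow_val, hd1, hd2, hd3,
      Matrix.diagonal_pow, Matrix.diagonal_pow, Matrix.diagonal_pow,
      Matrix.diagonal_mul_diagonal, Matrix.diagonal_mul_diagonal]
    rfl
  have huzw : u = z * w := by
    have hvi : ∀ i : Fin 4, v i = ω ^ e 3 * ((![ω, 1, 1, 1] i) ^ a * (![1, ω, 1, 1] i) ^ b
        * (![1, 1, ω, 1] i) ^ c) := by
      intro i
      fin_cases i
      · show v 0 = ω ^ e 3 * ((![ω, 1, 1, 1] 0) ^ a * (![1, ω, 1, 1] 0) ^ b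
            * (![1, 1, ω, 1] 0) ^ c)
        simp only [Matrix.cons_val_zero, one_pow, mul_one]
        rw [he 0, ← pow_add, hadef, show e 3 + (e 0 + 2 * e 3) = e 0 + 3 * e 3 by ring, key]
      · show v 1 = ω ^ e 3 * ((![ω, 1, 1, 1] 1) ^ a * (![1, ω, 1, 1] 1) ^ b
            * (![1, 1, ω, 1] 1) ^ c)
        simp only [Matrix.cons_val_one, Matrix.head_cons, Matrix.cons_val_zero, one_pow, mul_one, one_mul]
        rw [he 1, ← pow_add, hbdef, show e 3 + (e 1 + 2 * e 3) = e 1 + 3 * e 3 by ring, key]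
      · show v 2 = ω ^ e 3 * ((![ω, 1, 1, 1] 2) ^ a * (![1, ω, 1, 1] 2) ^ b
            * (![1, 1, ω, 1] 2) ^ c)
        have h2a : (![ω, 1, 1, 1] : Fin 4 → k) 2 = 1 := rfl
        have h2b : (![1, ω, 1, 1] : Fin 4 → k) 2 = 1 := rfl
        have h2c : (![1, 1, ω, 1] : Fin 4 → k) 2 = ω := rfl
        rw [h2a, h2b, h2c, one_pow, one_pow, one_mul, one_mul]
        rw [he 2, ← pow_add, hcdef, show e 3 + (e 2 + 2 * e 3) = e 2 + 3 * e 3 by ring, key]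
      · show v 3 = ω ^ e 3 * ((![ω, 1, 1, 1] 3) ^ a * (![1, ω, 1, 1] 3) ^ b
            * (![1, 1, ω, 1] 3) ^ c)
        have h3a : (![ω, 1, 1, 1] : Fin 4 → k) 3 = 1 := rfl
        have h3b : (![1, ω, 1, 1] : Fin 4 → k) 3 = 1 := rfl
        have h3c : (![1, 1, ω, 1] : Fin 4 → k) 3 = 1 := rfl
        rw [h3a, h3b, h3c, one_pow, one_pow, one_pow, one_mul, one_mul, mul_one]
        exact he 3
    apply Units.ext
    rw [Units.val_mul, hu, hzdef, scalarU_val, Units.val_pow_eq_pow_val]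
    have hωuval : ((ωu : kˣ) : k) = ω := rfl
    rw [hωuval, hw, Matrix.scalar_apply, Matrix.diagonal_mul_diagonal]
    ext i j
    by_cases hij : i = j
    · subst hij
      rw [Matrix.diagonal_apply_eq, Matrix.diagonal_apply_eq]
      simpa using hvi i
    · rw [Matrix.diagonal_apply_ne _ hij, Matrix.diagonal_apply_ne _ hij]
  rw [huzw, _root_.map_mul, pi_scalarU, one_mul, hwdef, _root_.map_mul, _root_.map_mul,
    map_pow, map_pow, map_pow]
  have m1 : QuotientGroup.mk' (Subgroup.center (GL (Fin 4) k)) d1 ∈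
      Subgroup.closure ({QuotientGroup.mk' (Subgroup.center (GL (Fin 4) k)) d1,
        QuotientGroup.mk' (Subgroup.center (GL (Fin 4) k)) d2,
        QuotientGroup.mk' (Subgroup.center (GL (Fin 4) k)) d3} :
          Set (GL (Fin 4) k ⧸ Subgroup.center (GL (Fin 4) k))) :=
    Subgroup.subset_closure (by simp)
  have m2 : QuotientGroup.mk' (Subgroup.center (GL (Fin 4) k)) d2 ∈
      Subgroup.closure ({QuotientGroup.mk' (Subgroup.center (GL (Fin 4) k)) d1,
        QuotientGroup.mk' (Subgroup.center (GL (Fin 4) k)) d2,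
        QuotientGroup.mk' (Subgroup.center (GL (Fin 4) k)) d3} :
          Set (GL (Fin 4) k ⧸ Subgroup.center (GL (Fin 4) k))) :=
    Subgroup.subset_closure (by simp)
  have m3 : QuotientGroup.mk' (Subgroup.center (GL (Fin 4) k)) d3 ∈
      Subgroup.closure ({QuotientGroup.mk' (Subgroup.center (GL (Fin 4) k)) d1,
        QuotientGroup.mk' (Subgroup.center (GL (Fin 4) k)) d2,
        QuotientGroup.mk' (Subgroup.center (GL (Fin 4) k)) d3} :
          Set (GL (Fin 4) k ⧸ Subgroup.center (GL (Fin 4) k))) :=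
    Subgroup.subset_closure (by simp)
  exact mul_mem (mul_mem (pow_mem m1 a) (pow_mem m2 b)) (pow_mem m3 c)

end DiagMem


abbrev C3 := Multiplicative (ZMod 3) × Multiplicative (ZMod 3) × Multiplicative (ZMod 3)

def gg1 : C3 := (Multiplicative.ofAdd 1, 1, 1)
def gg2 : C3 := (1, Multiplicative.ofAdd 1, 1)
def gg3 : C3 := (1, 1, Multiplicative.ofAdd 1)

lemma hkeyC : ∀ z : C3, z = gg1 ^ ((Multiplicative.toAdd z.1).val)
    * gg2 ^ ((Multiplicative.toAdd z.2.1).val)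
    * gg3 ^ ((Multiplicative.toAdd z.2.2).val) := by decide

lemma C3_top : (⊤ : Subgroup C3) = Subgroup.closure {gg1, gg2, gg3} := by
  refine le_antisymm ?_ le_top
  intro z _
  have m1 : gg1 ∈ Subgroup.closure ({gg1, gg2, gg3} : Set C3) :=
    Subgroup.subset_closure (by simp)
  have m2 : gg2 ∈ Subgroup.closure ({gg1, gg2, gg3} : Set C3) :=
    Subgroup.subset_closure (by simp)
  have m3 : gg3 ∈ Subgroup.closure ({gg1, gg2, gg3} : Set C3) :=
    Subgroup.subset_closure (by simp)
  have h := hkeyC z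
  rw [h]
  exact mul_mem (mul_mem (pow_mem m1 _) (pow_mem m2 _)) (pow_mem m3 _)

lemma C3_card : Nat.card C3 = 27 := by
  rw [Nat.card_eq_fintype_card]
  decide

end Stmt2Aux

open Stmt2Aux

theorem stmt2 (k : Type*) [Field k] [IsAlgClosed k] [CharZero k]
    (ω : k) (hω3 : ω ^ 3 = 1) (hω1 : ω ≠ 1)
    (d1 d2 d3 : GL (Fin 4) k)
    (hd1 : (d1 : Matrix (Fin 4) (Fin 4) k) = Matrix.diagonal ![ω, 1, 1, 1])
    (hd2 : (d2 : Matrix (Fin 4) (Fin 4) k) = Matrix.diagonal ![1, ω, 1, 1])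
    (hd3 : (d3 : Matrix (Fin 4) (Fin 4) k) = Matrix.diagonal ![1, 1, ω, 1])
    (G : Subgroup (GL (Fin 4) k ⧸ Subgroup.center (GL (Fin 4) k)))
    (hG : Nonempty (G ≃*
      (Multiplicative (ZMod 3) × Multiplicative (ZMod 3) × Multiplicative (ZMod 3)))) :
    ∃ g : GL (Fin 4) k ⧸ Subgroup.center (GL (Fin 4) k),
      Subgroup.map (MulAut.conj g).toMonoidHom G =
        Subgroup.closure
          {QuotientGroup.mk d1, QuotientGroup.mk d2, QuotientGroup.mk d3} := by
  classical
  obtain ⟨e⟩ := hG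
  let y1 := ((e.symm gg1 : G) : GL (Fin 4) k ⧸ Subgroup.center (GL (Fin 4) k))
  let y2 := ((e.symm gg2 : G) : GL (Fin 4) k ⧸ Subgroup.center (GL (Fin 4) k))
  let y3 := ((e.symm gg3 : G) : GL (Fin 4) k ⧸ Subgroup.center (GL (Fin 4) k))
  have hGen : G = Subgroup.closure {y1, y2, y3} := by
    have h1 : G = Subgroup.map G.subtype ⊤ := by
      rw [← MonoidHom.range_eq_map, Subgroup.range_subtype]
    have h2 : (⊤ : Subgroup G) = Subgroup.map e.symm.toMonoidHom ⊤ :=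
      (Subgroup.map_top_of_surjective _ e.symm.surjective).symm
    rw [h1, h2, C3_top, MonoidHom.map_closure, MonoidHom.map_closure]
    congr 1
    simp only [Set.image_insert_eq, Set.image_singleton]
    rfl
  have hy1pow : y1 ^ 3 = 1 := by
    have h : (e.symm gg1) ^ 3 = 1 := by
      rw [← _root_.map_pow, show gg1 ^ 3 = 1 from by decide, _root_.map_one]
    show ((e.symm gg1 : G) : GL (Fin 4) k ⧸ Subgroup.center (GL (Fin 4) k)) ^ 3 = 1
    rw [← SubmonoidClass.coe_pow, h, OneMemClass.coe_one]
  have hy2pow : y2 ^ 3 = 1 := by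
    have h : (e.symm gg2) ^ 3 = 1 := by
      rw [← _root_.map_pow, show gg2 ^ 3 = 1 from by decide, _root_.map_one]
    show ((e.symm gg2 : G) : GL (Fin 4) k ⧸ Subgroup.center (GL (Fin 4) k)) ^ 3 = 1
    rw [← SubmonoidClass.coe_pow, h, OneMemClass.coe_one]
  have hy3pow : y3 ^ 3 = 1 := by
    have h : (e.symm gg3) ^ 3 = 1 := by
      rw [← _root_.map_pow, show gg3 ^ 3 = 1 from by decide, _root_.map_one]
    show ((e.symm gg3 : G) : GL (Fin 4) k ⧸ Subgroup.center (GL (Fin 4) k)) ^ 3 = 1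
    rw [← SubmonoidClass.coe_pow, h, OneMemClass.coe_one]
  have hycomm12 : y1 * y2 = y2 * y1 := by
    show ((e.symm gg1 : G) : GL (Fin 4) k ⧸ Subgroup.center (GL (Fin 4) k)) * ((e.symm gg2 : G) : GL (Fin 4) k ⧸ Subgroup.center (GL (Fin 4) k))
        = ((e.symm gg2 : G) : GL (Fin 4) k ⧸ Subgroup.center (GL (Fin 4) k)) * ((e.symm gg1 : G) : GL (Fin 4) k ⧸ Subgroup.center (GL (Fin 4) k))
    rw [← Subgroup.coe_mul, ← Subgroup.coe_mul, ← _root_.map_mul, ← _root_.map_mul,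
      show gg1 * gg2 = gg2 * gg1 from by decide]
  have hycomm13 : y1 * y3 = y3 * y1 := by
    show ((e.symm gg1 : G) : GL (Fin 4) k ⧸ Subgroup.center (GL (Fin 4) k)) * ((e.symm gg3 : G) : GL (Fin 4) k ⧸ Subgroup.center (GL (Fin 4) k))
        = ((e.symm gg3 : G) : GL (Fin 4) k ⧸ Subgroup.center (GL (Fin 4) k)) * ((e.symm gg1 : G) : GL (Fin 4) k ⧸ Subgroup.center (GL (Fin 4) k))
    rw [← Subgroup.coe_mul, ← Subgroup.coe_mul, ← _root_.map_mul, ← _root_.map_mul,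
      show gg1 * gg3 = gg3 * gg1 from by decide]
  have hycomm23 : y2 * y3 = y3 * y2 := by
    show ((e.symm gg2 : G) : GL (Fin 4) k ⧸ Subgroup.center (GL (Fin 4) k)) * ((e.symm gg3 : G) : GL (Fin 4) k ⧸ Subgroup.center (GL (Fin 4) k))
        = ((e.symm gg3 : G) : GL (Fin 4) k ⧸ Subgroup.center (GL (Fin 4) k)) * ((e.symm gg2 : G) : GL (Fin 4) k ⧸ Subgroup.center (GL (Fin 4) k))
    rw [← Subgroup.coe_mul, ← Subgroup.coe_mul, ← _root_.map_mul, ← _root_.map_mul,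
      show gg2 * gg3 = gg3 * gg2 from by decide]
  obtain ⟨A1, hA1π, hA1c⟩ := exists_lift y1 hy1pow
  obtain ⟨A2, hA2π, hA2c⟩ := exists_lift y2 hy2pow
  obtain ⟨A3, hA3π, hA3c⟩ := exists_lift y3 hy3pow
  have hc12 : A1 * A2 = A2 * A1 :=
    lifts_commute A1 A2 hA1c hA2c (by rw [hA1π, hA2π]; exact hycomm12)
  have hc13 : A1 * A3 = A3 * A1 :=
    lifts_commute A1 A3 hA1c hA3c (by rw [hA1π, hA3π]; exact hycomm13)
  have hc23 : A2 * A3 = A3 * A2 :=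
    lifts_commute A2 A3 hA2c hA3c (by rw [hA2π, hA3π]; exact hycomm23)
  let U : Fin 3 → GL (Fin 4) k := ![A1, A2, A3]
  have liftc : ∀ X Y : GL (Fin 4) k, X * Y = Y * X →
      (X : Matrix (Fin 4) (Fin 4) k) * (Y : Matrix (Fin 4) (Fin 4) k)
        = (Y : Matrix (Fin 4) (Fin 4) k) * (X : Matrix (Fin 4) (Fin 4) k) := by
    intro X Y h
    rw [← Units.val_mul, ← Units.val_mul, h]
  have hUcomm : ∀ i j : Fin 3, ((U i : GL (Fin 4) k) : Matrix (Fin 4) (Fin 4) k) * (U j : GL (Fin 4) k)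
      = ((U j : GL (Fin 4) k) : Matrix (Fin 4) (Fin 4) k) * (U i : GL (Fin 4) k) := by
    intro i j
    fin_cases i <;> fin_cases j <;>
      first
        | rfl
        | exact liftc _ _ hc12
        | exact liftc _ _ hc12.symm
        | exact liftc _ _ hc13
        | exact liftc _ _ hc13.symm
        | exact liftc _ _ hc23
        | exact liftc _ _ hc23.symm
  have hUcube : ∀ i : Fin 3, ((U i : GL (Fin 4) k) : Matrix (Fin 4) (Fin 4) k) ^ 3 = 1 := by
    have liftp : ∀ X : GL (Fin 4) k, X ^ 3 = 1 →
        (X : Matrix (Fin 4) (Fin 4) k) ^ 3 = 1 := by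
      intro X h
      rw [← Units.val_pow_eq_pow_val, h, Units.val_one]
    intro i
    fin_cases i
    · exact liftp _ hA1c
    · exact liftp _ hA2c
    · exact liftp _ hA3c
  obtain ⟨P, hPinv, dd, hdcube, hdiag⟩ :=
    simul_diag ω hω3 hω1 (fun i => ((U i : GL (Fin 4) k) : Matrix (Fin 4) (Fin 4) k))
      hUcomm hUcube
  haveI := hPinv
  let Pu : GL (Fin 4) k := unitOfInvertible P
  refine ⟨(QuotientGroup.mk' (Subgroup.center (GL (Fin 4) k)) Pu)⁻¹, ?_⟩
  have main : ∀ i : Fin 3,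
      (MulAut.conj (QuotientGroup.mk' (Subgroup.center (GL (Fin 4) k)) Pu)⁻¹).toMonoidHom
        (QuotientGroup.mk' (Subgroup.center (GL (Fin 4) k)) (U i)) ∈
      Subgroup.closure ({QuotientGroup.mk d1, QuotientGroup.mk d2, QuotientGroup.mk d3} :
        Set (GL (Fin 4) k ⧸ Subgroup.center (GL (Fin 4) k))) := by
    intro i
    have hval : ((Pu⁻¹ * U i * Pu : GL (Fin 4) k) : Matrix (Fin 4) (Fin 4) k)
        = Matrix.diagonal (dd i) := by
      have h1 : ((U i : GL (Fin 4) k) : Matrix (Fin 4) (Fin 4) k) * P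
          = P * Matrix.diagonal (dd i) := hdiag i
      have hPu : (Pu : Matrix (Fin 4) (Fin 4) k) = P := rfl
      calc ((Pu⁻¹ * U i * Pu : GL (Fin 4) k) : Matrix (Fin 4) (Fin 4) k)
          = ((Pu⁻¹ : GL (Fin 4) k) : Matrix (Fin 4) (Fin 4) k)
            * (((U i : GL (Fin 4) k) : Matrix (Fin 4) (Fin 4) k) * (Pu : Matrix (Fin 4) (Fin 4) k)) := by
            rw [Units.val_mul, Units.val_mul, mul_assoc]
        _ = ((Pu⁻¹ : GL (Fin 4) k) : Matrix (Fin 4) (Fin 4) k)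
            * ((Pu : Matrix (Fin 4) (Fin 4) k) * Matrix.diagonal (dd i)) := by
            rw [hPu, h1, ← hPu]
        _ = (((Pu⁻¹ : GL (Fin 4) k) : Matrix (Fin 4) (Fin 4) k)
            * (Pu : Matrix (Fin 4) (Fin 4) k)) * Matrix.diagonal (dd i) := by
            rw [mul_assoc]
        _ = Matrix.diagonal (dd i) := by rw [Pu.inv_mul, one_mul]
    have hconj : (MulAut.conj (QuotientGroup.mk' (Subgroup.center (GL (Fin 4) k)) Pu)⁻¹).toMonoidHom
        (QuotientGroup.mk' (Subgroup.center (GL (Fin 4) k)) (U i))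
        = QuotientGroup.mk' (Subgroup.center (GL (Fin 4) k)) (Pu⁻¹ * U i * Pu) := by
      show (MulAut.conj (QuotientGroup.mk' (Subgroup.center (GL (Fin 4) k)) Pu)⁻¹)
        (QuotientGroup.mk' (Subgroup.center (GL (Fin 4) k)) (U i)) = _
      rw [MulAut.conj_apply, inv_inv, _root_.map_mul, _root_.map_mul, map_inv]
    rw [hconj]
    exact diag_mem ω hω3 hω1 d1 d2 d3 hd1 hd2 hd3 _ (dd i) (fun j => hdcube i j) hval
  have hle : Subgroup.map
      (MulAut.conj (QuotientGroup.mk' (Subgroup.center (GL (Fin 4) k)) Pu)⁻¹).toMonoidHom G ≤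
      Subgroup.closure ({QuotientGroup.mk d1, QuotientGroup.mk d2, QuotientGroup.mk d3} :
        Set (GL (Fin 4) k ⧸ Subgroup.center (GL (Fin 4) k))) := by
    rw [hGen, MonoidHom.map_closure, Subgroup.closure_le]
    rintro x ⟨w, hw, rfl⟩
    simp only [Set.mem_insert_iff, Set.mem_singleton_iff] at hw
    rcases hw with rfl | rfl | rfl
    · have h := main 0
      rwa [show QuotientGroup.mk' (Subgroup.center (GL (Fin 4) k)) (U 0) = y1 from hA1π] at h
    · have h := main 1
      rwa [show QuotientGroup.mk' (Subgroup.center (GL (Fin 4) k)) (U 1) = y2 from hA2π] at h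
    · have h := main 2
      rwa [show QuotientGroup.mk' (Subgroup.center (GL (Fin 4) k)) (U 2) = y3 from hA3π] at h
  -- commutation and cube facts for the target generators
  have hdd12 : d1 * d2 = d2 * d1 := by
    apply Units.ext
    rw [Units.val_mul, Units.val_mul, hd1, hd2, Matrix.diagonal_mul_diagonal,
      Matrix.diagonal_mul_diagonal]
    exact congrArg Matrix.diagonal (funext fun i => mul_comm _ _)
  have hdd13 : d1 * d3 = d3 * d1 := by
    apply Units.ext
    rw [Units.val_mul, Units.val_mul, hd1, hd3, Matrix.diagonal_mul_diagonal,
      Matrix.diagonal_mul_diagonal]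
    exact congrArg Matrix.diagonal (funext fun i => mul_comm _ _)
  have hdd23 : d2 * d3 = d3 * d2 := by
    apply Units.ext
    rw [Units.val_mul, Units.val_mul, hd2, hd3, Matrix.diagonal_mul_diagonal,
      Matrix.diagonal_mul_diagonal]
    exact congrArg Matrix.diagonal (funext fun i => mul_comm _ _)
  have dcube : ∀ (dX : GL (Fin 4) k) (vX : Fin 4 → k), (∀ i, vX i ^ 3 = 1) →
      ((dX : Matrix (Fin 4) (Fin 4) k) = Matrix.diagonal vX) → dX ^ 3 = 1 := by
    intro dX vX hvX hdX
    apply Units.ext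
    rw [Units.val_pow_eq_pow_val, hdX, Matrix.diagonal_pow, Units.val_one]
    rw [show vX ^ 3 = 1 from funext fun i => hvX i]
    exact Matrix.diagonal_one
  have hv1 : ∀ i, (![ω, 1, 1, 1] : Fin 4 → k) i ^ 3 = 1 := by
    intro i
    fin_cases i
    · exact hω3
    · exact one_pow 3
    · exact one_pow 3
    · exact one_pow 3
  have hv2 : ∀ i, (![1, ω, 1, 1] : Fin 4 → k) i ^ 3 = 1 := by
    intro i
    fin_cases i
    · exact one_pow 3
    · exact hω3
    · exact one_pow 3
    · exact one_pow 3
  have hv3 : ∀ i, (![1, 1, ω, 1] : Fin 4 → k) i ^ 3 = 1 := by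
    intro i
    fin_cases i
    · exact one_pow 3
    · exact one_pow 3
    · exact hω3
    · exact one_pow 3
  have hd1cube : d1 ^ 3 = 1 := dcube d1 _ hv1 hd1
  have hd2cube : d2 ^ 3 = 1 := dcube d2 _ hv2 hd2
  have hd3cube : d3 ^ 3 = 1 := dcube d3 _ hv3 hd3
  have cq12 : Commute (QuotientGroup.mk d1 : GL (Fin 4) k ⧸ Subgroup.center (GL (Fin 4) k))
      (QuotientGroup.mk d2) := by
    show QuotientGroup.mk d1 * QuotientGroup.mk d2 = QuotientGroup.mk d2 * QuotientGroup.mk d1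
    rw [← QuotientGroup.mk_mul, ← QuotientGroup.mk_mul, hdd12]
  have cq13 : Commute (QuotientGroup.mk d1 : GL (Fin 4) k ⧸ Subgroup.center (GL (Fin 4) k))
      (QuotientGroup.mk d3) := by
    show QuotientGroup.mk d1 * QuotientGroup.mk d3 = QuotientGroup.mk d3 * QuotientGroup.mk d1
    rw [← QuotientGroup.mk_mul, ← QuotientGroup.mk_mul, hdd13]
  have cq23 : Commute (QuotientGroup.mk d2 : GL (Fin 4) k ⧸ Subgroup.center (GL (Fin 4) k))
      (QuotientGroup.mk d3) := by
    show QuotientGroup.mk d2 * QuotientGroup.mk d3 = QuotientGroup.mk d3 * QuotientGroup.mk d2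
    rw [← QuotientGroup.mk_mul, ← QuotientGroup.mk_mul, hdd23]
  have pq1 : (QuotientGroup.mk d1 : GL (Fin 4) k ⧸ Subgroup.center (GL (Fin 4) k)) ^ 3 = 1 := by
    show (QuotientGroup.mk' (Subgroup.center (GL (Fin 4) k)) d1) ^ 3 = 1
    rw [← map_pow, hd1cube, _root_.map_one]
  have pq2 : (QuotientGroup.mk d2 : GL (Fin 4) k ⧸ Subgroup.center (GL (Fin 4) k)) ^ 3 = 1 := by
    show (QuotientGroup.mk' (Subgroup.center (GL (Fin 4) k)) d2) ^ 3 = 1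
    rw [← map_pow, hd2cube, _root_.map_one]
  have pq3 : (QuotientGroup.mk d3 : GL (Fin 4) k ⧸ Subgroup.center (GL (Fin 4) k)) ^ 3 = 1 := by
    show (QuotientGroup.mk' (Subgroup.center (GL (Fin 4) k)) d3) ^ 3 = 1
    rw [← map_pow, hd3cube, _root_.map_one]
  obtain ⟨hDfin, hDcard⟩ := card_closure_triple cq12 cq13 cq23 pq1 pq2 pq3
  have hcardG : Nat.card G = 27 := by
    rw [Nat.card_congr e.toEquiv]
    exact C3_card
  have hinj : Function.Injective
      ⇑(MulAut.conj (QuotientGroup.mk' (Subgroup.center (GL (Fin 4) k)) Pu)⁻¹).toMonoidHom :=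
    (MulAut.conj (QuotientGroup.mk' (Subgroup.center (GL (Fin 4) k)) Pu)⁻¹).injective
  have hcardmap : Nat.card (Subgroup.map
      (MulAut.conj (QuotientGroup.mk' (Subgroup.center (GL (Fin 4) k)) Pu)⁻¹).toMonoidHom G)
      = 27 :=
    (Nat.card_congr (G.equivMapOfInjective _ hinj).toEquiv).symm.trans hcardG
  apply SetLike.coe_injective
  refine Set.eq_of_subset_of_ncard_le (SetLike.coe_subset_coe.mpr hle) ?_ ?_
  · rw [← Nat.card_coe_set_eq, ← Nat.card_coe_set_eq]
    exact hDcard.trans hcardmap.ge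
  · exact Set.finite_coe_iff.mp hDfin
end

section
/- Let f be a homogeneous cubic form in variables x,y,z,t over an algebraically closed field k of characteristic zero, and suppose that for each of A₁ = diag[ω,1,1,1], A₂ = diag[1,ω,1,1], A₃ = diag[1,1,ω,1] (ω a primitive cube root of unity) the form f(A_i·(x,y,z,t)) is a scalar multiple of f, and suppose the projective surface V(f) is nonsingular. Then f = a₁x³ + a₂y³ + a₃z³ + a₄t³ with a₁a₂a₃a₄ ≠ 0. -/
open MvPolynomial

/-- The polynomial `f(A·(x,y,z,t))`, i.e. the linear substitution of the
variables of `f` given by the matrix `A`. -/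
noncomputable def substM {k : Type*} [CommRing k] (A : Matrix (Fin 4) (Fin 4) k)
    (f : MvPolynomial (Fin 4) k) : MvPolynomial (Fin 4) k :=
  MvPolynomial.aeval (fun i => ∑ j : Fin 4, MvPolynomial.C (A i j) * MvPolynomial.X j) f

lemma substM_diag {K : Type*} [CommRing K] (d : Fin 4 → K) (f : MvPolynomial (Fin 4) K)
    (m : Fin 4 →₀ ℕ) :
    coeff m (substM (Matrix.diagonal d) f) = (∏ i, d i ^ m i) * coeff m f := by
  have hg : (fun i => ∑ j : Fin 4, MvPolynomial.C (Matrix.diagonal d i j) * MvPolynomial.X j)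
      = fun i => (C (d i) * X i : MvPolynomial (Fin 4) K) := by
    funext i
    rw [Finset.sum_eq_single i]
    · simp
    · intro j _ hj
      rw [Matrix.diagonal_apply_ne d (Ne.symm hj)]; simp
    · simp
  rw [substM, hg]
  induction f using MvPolynomial.induction_on' with
  | monomial s a =>
    rw [aeval_monomial, Finsupp.prod_pow]
    have h1 : (∏ i, (C (d i) * X i : MvPolynomial (Fin 4) K) ^ s i)
        = C (∏ i, d i ^ s i) * ∏ i, (X i : MvPolynomial (Fin 4) K) ^ s i := by
      rw [map_prod]
      rw [← Finset.prod_mul_distrib]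
      exact Finset.prod_congr rfl fun i _ => by rw [mul_pow, C_pow]
    have h2 : (monomial s (1:K) : MvPolynomial (Fin 4) K)
        = ∏ i, (X i : MvPolynomial (Fin 4) K) ^ s i := by
      rw [monomial_eq, Finsupp.prod_pow, map_one, one_mul]
    rw [h1, ← h2, algebraMap_eq, ← mul_assoc, ← map_mul, coeff_C_mul, coeff_monomial,
      coeff_monomial]
    by_cases h : s = m
    · subst h; simp [mul_comm]
    · simp [h]
  | add p q hp hq => rw [map_add, coeff_add, hp, hq, coeff_add, mul_add]

lemma sing_aux {K : Type*} [CommRing K] (f : MvPolynomial (Fin 4) K)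
    (hdeg : ∀ m ∈ f.support, ∑ i, m i = 3)
    (j : Fin 4) (h : ∀ m ∈ f.support, m j ≤ 1) (l : Fin 4) :
    eval (Pi.single j 1) (pderiv l f) = 0 := by
  conv_lhs => rw [f.as_sum]
  rw [map_sum, map_sum]
  apply Finset.sum_eq_zero
  intro m hm
  rw [pderiv_monomial, eval_monomial]
  by_cases hl : m l = 0
  · simp [hl]
  · set t := m - Finsupp.single l 1 with htdef
    have hml : 1 ≤ m l := Nat.one_le_iff_ne_zero.mpr hl
    have ht : ∀ i, t i = m i - Finsupp.single l 1 i := fun i => Finsupp.tsub_apply _ _ i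
    have hle : ∀ i ∈ Finset.univ (α := Fin 4), Finsupp.single l 1 i ≤ m i := by
      intro i _
      rw [Finsupp.single_apply]
      split
      · next hli => subst hli; exact hml
      · exact Nat.zero_le _
    have hex : ∃ s, s ≠ j ∧ t s ≠ 0 := by
      by_contra hc
      push_neg at hc
      have hTsum : ∑ i, t i = t j :=
        Finset.sum_eq_single_of_mem j (Finset.mem_univ j) (fun b _ hb => hc b hb)
      have hT2 : ∑ i, t i = 2 := by
        have hdist := Finset.sum_tsub_distrib (s := Finset.univ) (f := fun i => m i)
          (g := fun i => Finsupp.single l 1 i) hle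
        have hsing : ∑ i, Finsupp.single l 1 i = 1 := by
          simp [Finsupp.single_apply]
        calc ∑ i, t i = ∑ i, (m i - Finsupp.single l 1 i) :=
              Finset.sum_congr rfl fun i _ => ht i
          _ = (∑ i, m i) - ∑ i, Finsupp.single l 1 i := hdist
          _ = 2 := by rw [hdeg m hm, hsing]
      have htjle : t j ≤ m j := by rw [ht j]; omega
      have := h m hm
      omega
    obtain ⟨s, hsj, hts⟩ := hex
    rw [Finsupp.prod_pow]
    rw [Finset.prod_eq_zero (Finset.mem_univ s)]
    · ring
    · rw [Pi.single_apply, if_neg hsj]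
      exact zero_pow hts

lemma omega_pow_inj {K : Type*} [Field K] {ω : K} (hω3 : ω ^ 3 = 1) (hω1 : ω ≠ 1)
    {a b : ℕ} (h : ω ^ a = ω ^ b) : a % 3 = b % 3 := by
  have hω0 : ω ≠ 0 := by
    intro h0
    rw [h0] at hω3
    simp at hω3
  have h21 : ω ^ 2 ≠ 1 := by
    intro h2
    apply hω1
    have : ω ^ 3 = ω ^ 2 * ω := by ring
    rw [hω3, h2, one_mul] at this
    exact this.symm
  have h12 : ω ≠ ω ^ 2 := by
    intro h2
    apply hω1
    have : ω * 1 = ω * ω := by rw [mul_one]; rw [pow_two] at h2; exact h2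
    exact (mul_left_cancel₀ hω0 this).symm
  have hred : ∀ n : ℕ, ω ^ n = ω ^ (n % 3) := by
    intro n
    conv_lhs => rw [← Nat.div_add_mod n 3]
    rw [pow_add, pow_mul, hω3, one_pow, one_mul]
  rw [hred a, hred b] at h
  have ha : a % 3 < 3 := Nat.mod_lt _ (by norm_num)
  have hb : b % 3 < 3 := Nat.mod_lt _ (by norm_num)
  set x := a % 3
  set y := b % 3
  clear_value x y
  clear hred
  interval_cases x <;> interval_cases y <;> first
    | rfl
    | (exfalso; simp only [pow_zero, pow_one] at h;
        first
          | exact hω1 h | exact hω1 h.symm | exact h21 h | exact h21 h.symm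
          | exact h12 h | exact h12 h.symm)

private lemma single_le_sum4 (m : Fin 4 →₀ ℕ) (i : Fin 4) : m i ≤ ∑ s, m s :=
  Finset.single_le_sum (fun _ _ => Nat.zero_le _) (Finset.mem_univ i)

theorem stmt3 (k : Type*) [Field k] [IsAlgClosed k] [CharZero k]
    (ω : k) (hω3 : ω ^ 3 = 1) (hω1 : ω ≠ 1)
    (f : MvPolynomial (Fin 4) k) (hf : f.IsHomogeneous 3)
    (hinv : ∀ A ∈ ({Matrix.diagonal ![ω, 1, 1, 1], Matrix.diagonal ![1, ω, 1, 1],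
        Matrix.diagonal ![1, 1, ω, 1]} : Set (Matrix (Fin 4) (Fin 4) k)),
      ∃ c : k, c ≠ 0 ∧ substM A f = c • f)
    (hns : ¬ ∃ a : Fin 4 → k, a ≠ 0 ∧
      ∀ i : Fin 4, MvPolynomial.eval a (MvPolynomial.pderiv i f) = 0) :
    ∃ a₁ a₂ a₃ a₄ : k, a₁ * a₂ * a₃ * a₄ ≠ 0 ∧
      f = MvPolynomial.C a₁ * MvPolynomial.X 0 ^ 3 + MvPolynomial.C a₂ * MvPolynomial.X 1 ^ 3 +
          MvPolynomial.C a₃ * MvPolynomial.X 2 ^ 3 + MvPolynomial.C a₄ * MvPolynomial.X 3 ^ 3 := by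
  -- degrees
  have hdeg : ∀ m ∈ f.support, ∑ i, m i = 3 := by
    intro m hm
    have := hf (MvPolynomial.mem_support_iff.mp hm)
    rw [Finsupp.weight_apply, Finsupp.sum_fintype] at this
    · simpa using this
    · simp
  -- the invariance forces constancy of the scalar products on the support
  have key : ∀ (d : Fin 4 → k), (∃ c : k, c ≠ 0 ∧ substM (Matrix.diagonal d) f = c • f) →
      ∀ m ∈ f.support, ∀ m' ∈ f.support, (∏ i, d i ^ m i) = (∏ i, d i ^ m' i) := by
    rintro d ⟨c, _, heq⟩ m hm m' hm'
    have e : ∀ s ∈ f.support, (∏ i, d i ^ s i) = c := by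
      intro s hs
      have e1 : (∏ i, d i ^ s i) * coeff s f = c * coeff s f := by
        rw [← substM_diag, heq, coeff_smul, smul_eq_mul]
      exact mul_right_cancel₀ (MvPolynomial.mem_support_iff.mp hs) e1
    rw [e m hm, e m' hm']
  have h0 : ∀ m ∈ f.support, ∀ m' ∈ f.support, ω ^ (m 0) = ω ^ (m' 0) := by
    intro m hm m' hm'
    have := key ![ω, 1, 1, 1] (hinv _ (Set.mem_insert _ _)) m hm m' hm'
    simpa [Fin.prod_univ_four] using this
  have h1 : ∀ m ∈ f.support, ∀ m' ∈ f.support, ω ^ (m 1) = ω ^ (m' 1) := by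
    intro m hm m' hm'
    have := key ![1, ω, 1, 1]
      (hinv _ (Set.mem_insert_of_mem _ (Set.mem_insert _ _))) m hm m' hm'
    simpa [Fin.prod_univ_four] using this
  have h2 : ∀ m ∈ f.support, ∀ m' ∈ f.support, ω ^ (m 2) = ω ^ (m' 2) := by
    intro m hm m' hm'
    have := key ![1, 1, ω, 1]
      (hinv _ (Set.mem_insert_of_mem _ (Set.mem_insert_of_mem _ rfl))) m hm m' hm'
    simpa [Fin.prod_univ_four] using this
  -- nonsingularity: every variable appears with exponent ≥ 2 somewhere
  have hns' : ∀ j : Fin 4, ∃ m ∈ f.support, 2 ≤ m j := by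
    intro j
    by_contra hcon
    push_neg at hcon
    refine hns ⟨Pi.single j 1, ?_, fun l => sing_aux f hdeg j
      (fun m hm => Nat.lt_succ_iff.mp (hcon m hm)) l⟩
    intro h
    have := congrFun h j
    simp at this
  -- each exponent of the variables 0,1,2 is 0 or 3
  have main : ∀ i : Fin 4,
      (∀ m ∈ f.support, ∀ m' ∈ f.support, ω ^ (m i) = ω ^ (m' i)) →
      ∀ m ∈ f.support, m i = 0 ∨ m i = 3 := by
    intro i hconst m hm
    obtain ⟨m2, hm2, hm2i⟩ := hns' i
    have hb2 : m2 i ≤ 3 := by have := single_le_sum4 m2 i; rw [hdeg m2 hm2] at this; exact this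
    have hb : m i ≤ 3 := by have := single_le_sum4 m i; rw [hdeg m hm] at this; exact this
    have hcases : m2 i = 2 ∨ m2 i = 3 := by omega
    rcases hcases with hm22 | hm23
    · -- all exponents at i would be 2: contradiction
      exfalso
      have hall : ∀ m' ∈ f.support, m' i = 2 := by
        intro m' hm'
        have hmod := omega_pow_inj hω3 hω1 (hconst m' hm' m2 hm2)
        have hb' : m' i ≤ 3 := by
          have := single_le_sum4 m' i; rw [hdeg m' hm'] at this; exact this
        omega
      have hj : ∃ j : Fin 4, j ≠ i := by
        by_cases h : i = 0
        · exact ⟨1, by simp [h]⟩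
        · exact ⟨0, fun hh => h hh.symm⟩
      obtain ⟨j, hji⟩ := hj
      obtain ⟨m3, hm3, hm3j⟩ := hns' j
      have hi3 := hall m3 hm3
      have hpair : m3 i + m3 j ≤ ∑ s, m3 s := by
        have hsub : ({i, j} : Finset (Fin 4)) ⊆ Finset.univ := Finset.subset_univ _
        have := Finset.sum_le_sum_of_subset (f := fun s => m3 s) hsub
        rwa [Finset.sum_pair (fun hh => hji hh.symm)] at this
      rw [hdeg m3 hm3] at hpair
      omega
    · have hmod := omega_pow_inj hω3 hω1 (hconst m hm m2 hm2)
      rw [hm23] at hmod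
      omega
  have h03 : ∀ m ∈ f.support, (m 0 = 0 ∨ m 0 = 3) ∧ (m 1 = 0 ∨ m 1 = 3) ∧
      (m 2 = 0 ∨ m 2 = 3) ∧ (m 3 = 0 ∨ m 3 = 3) := by
    intro m hm
    have c0 := main 0 h0 m hm
    have c1 := main 1 h1 m hm
    have c2 := main 2 h2 m hm
    have csum := hdeg m hm
    rw [Fin.sum_univ_four] at csum
    exact ⟨c0, c1, c2, by omega⟩
  -- each support element is `single i 3`
  have hsingle : ∀ (m : Fin 4 →₀ ℕ) (i : Fin 4), m i = 3 → (∀ s, s ≠ i → m s = 0) →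
      m = Finsupp.single i 3 := by
    intro m i hi hs
    ext s
    rcases eq_or_ne s i with rfl | hsi
    · simp [hi]
    · rw [hs s hsi, Finsupp.single_apply, if_neg (fun hh => hsi hh.symm)]
  have hform : ∀ m ∈ f.support, m = Finsupp.single 0 3 ∨ m = Finsupp.single 1 3 ∨
      m = Finsupp.single 2 3 ∨ m = Finsupp.single 3 3 := by
    intro m hm
    obtain ⟨c0, c1, c2, c3⟩ := h03 m hm
    have csum := hdeg m hm
    rw [Fin.sum_univ_four] at csum
    have hone : (m 0 = 3 ∧ m 1 = 0 ∧ m 2 = 0 ∧ m 3 = 0) ∨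
        (m 1 = 3 ∧ m 0 = 0 ∧ m 2 = 0 ∧ m 3 = 0) ∨
        (m 2 = 3 ∧ m 0 = 0 ∧ m 1 = 0 ∧ m 3 = 0) ∨
        (m 3 = 3 ∧ m 0 = 0 ∧ m 1 = 0 ∧ m 2 = 0) := by omega
    rcases hone with ⟨ha, hb, hc, hd⟩ | ⟨ha, hb, hc, hd⟩ | ⟨ha, hb, hc, hd⟩ | ⟨ha, hb, hc, hd⟩
    · exact Or.inl (hsingle m 0 ha (fun s hs => by fin_cases s <;> first | exact absurd rfl hs | exact ha | exact hb | exact hc | exact hd))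
    · exact Or.inr (Or.inl (hsingle m 1 ha (fun s hs => by fin_cases s <;> first | exact absurd rfl hs | exact ha | exact hb | exact hc | exact hd)))
    · exact Or.inr (Or.inr (Or.inl (hsingle m 2 ha (fun s hs => by fin_cases s <;> first | exact absurd rfl hs | exact ha | exact hb | exact hc | exact hd))))
    · exact Or.inr (Or.inr (Or.inr (hsingle m 3 ha (fun s hs => by fin_cases s <;> first | exact absurd rfl hs | exact ha | exact hb | exact hc | exact hd))))
  -- all four singles are in the support
  have hmem : ∀ j : Fin 4, Finsupp.single j 3 ∈ f.support := by
    intro j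
    obtain ⟨m, hm, hmj⟩ := hns' j
    rcases hform m hm with h | h | h | h <;> subst h <;> fin_cases j <;>
      first
        | exact hm
        | (exfalso; simp [Finsupp.single_apply] at hmj)
  -- support is exactly the four singles
  have hsuppeq : f.support = {Finsupp.single 0 3, Finsupp.single 1 3,
      Finsupp.single 2 3, Finsupp.single 3 3} := by
    apply Finset.ext
    intro m
    constructor
    · intro hm
      rcases hform m hm with h | h | h | h <;> simp [h]
    · intro hm
      simp only [Finset.mem_insert, Finset.mem_singleton] at hm
      rcases hm with h | h | h | h <;> subst h <;> exact hmem _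
  have hdist : ∀ (a b : Fin 4), a ≠ b → Finsupp.single a (3:ℕ) ≠ Finsupp.single b 3 := by
    intro a b hab h
    exact hab (Finsupp.single_left_injective (by norm_num) h)
  refine ⟨coeff (Finsupp.single 0 3) f, coeff (Finsupp.single 1 3) f,
    coeff (Finsupp.single 2 3) f, coeff (Finsupp.single 3 3) f, ?_, ?_⟩
  · exact mul_ne_zero (mul_ne_zero (mul_ne_zero
      (MvPolynomial.mem_support_iff.mp (hmem 0)) (MvPolynomial.mem_support_iff.mp (hmem 1)))
      (MvPolynomial.mem_support_iff.mp (hmem 2))) (MvPolynomial.mem_support_iff.mp (hmem 3))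
  · rw [C_mul_X_pow_eq_monomial, C_mul_X_pow_eq_monomial, C_mul_X_pow_eq_monomial,
      C_mul_X_pow_eq_monomial]
    conv_lhs => rw [f.as_sum]
    rw [hsuppeq]
    rw [Finset.sum_insert (by
      simp only [Finset.mem_insert, Finset.mem_singleton]
      push_neg
      exact ⟨hdist 0 1 (by decide), hdist 0 2 (by decide), hdist 0 3 (by decide)⟩)]
    rw [Finset.sum_insert (by
      simp only [Finset.mem_insert, Finset.mem_singleton]
      push_neg
      exact ⟨hdist 1 2 (by decide), hdist 1 3 (by decide)⟩)]
    rw [Finset.sum_insert (by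
      simp only [Finset.mem_singleton]
      exact hdist 2 3 (by decide))]
    rw [Finset.sum_singleton]
    ring
end

section
/- The surface V(x²y + y²z + z²t + t²x) in P³ over an algebraically closed field of characteristic zero is nonsingular. -/
open MvPolynomial

theorem stmt7 (k : Type*) [Field k] [IsAlgClosed k] [CharZero k]
    (f : MvPolynomial (Fin 4) k)
    (hf : f = MvPolynomial.X 0 ^ 2 * MvPolynomial.X 1 +
        MvPolynomial.X 1 ^ 2 * MvPolynomial.X 2 +
        MvPolynomial.X 2 ^ 2 * MvPolynomial.X 3 +
        MvPolynomial.X 3 ^ 2 * MvPolynomial.X 0) :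
    ¬ ∃ a : Fin 4 → k, a ≠ 0 ∧
      ∀ i : Fin 4, MvPolynomial.eval a (MvPolynomial.pderiv i f) = 0 := by
  rintro ⟨a, ha, h⟩
  subst hf
  have h0 := h 0
  have h1 := h 1
  have h2 := h 2
  have h3 := h 3
  simp [pderiv_X, Pi.single_apply] at h0 h1 h2 h3
  set x := a 0 with hxd
  set y := a 1 with hyd
  set z := a 2 with hzd
  set t := a 3 with htd
  have sq0 : ∀ u : k, u ^ 2 = 0 → u = 0 := fun u hu =>
    pow_eq_zero_iff two_ne_zero |>.mp hu
  have hx : x ^ 2 = -(2 * y * z) := by linear_combination h1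
  have hy : y ^ 2 = -(2 * z * t) := by linear_combination h2
  have hz : z ^ 2 = -(2 * t * x) := by linear_combination h3
  have ht : t ^ 2 = -(2 * x * y) := by linear_combination h0
  have key : (15 : k) * (x * y * z * t) ^ 2 = 0 := by
    linear_combination (-(y ^ 2 * z ^ 2 * t ^ 2)) * hx +
      (2 * y * z * z ^ 2 * t ^ 2) * hy +
      (-(4 * y * z ^ 2 * t * t ^ 2)) * hz +
      (8 * x * y * z ^ 2 * t ^ 2) * ht
  have hp : x * y * z * t = 0 := by
    rcases mul_eq_zero.mp key with h' | h'
    · exact absurd h' (by norm_num)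
    · exact sq0 _ h'
  have hall : x = 0 ∧ y = 0 ∧ z = 0 ∧ t = 0 := by
    rcases mul_eq_zero.mp hp with h' | ht0
    · rcases mul_eq_zero.mp h' with h'' | hz0
      · rcases mul_eq_zero.mp h'' with hx0 | hy0
        · -- x = 0
          have ht0 : t = 0 := sq0 _ (by rw [ht, hx0]; ring)
          have hy0 : y = 0 := sq0 _ (by rw [hy, ht0]; ring)
          have hz0 : z = 0 := sq0 _ (by rw [hz, hx0]; ring)
          exact ⟨hx0, hy0, hz0, ht0⟩
        · -- y = 0
          have hx0 : x = 0 := sq0 _ (by rw [hx, hy0]; ring)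
          have ht0 : t = 0 := sq0 _ (by rw [ht, hx0]; ring)
          have hz0 : z = 0 := sq0 _ (by rw [hz, ht0]; ring)
          exact ⟨hx0, hy0, hz0, ht0⟩
      · -- z = 0
        have hy0 : y = 0 := sq0 _ (by rw [hy, hz0]; ring)
        have hx0 : x = 0 := sq0 _ (by rw [hx, hy0]; ring)
        have ht0 : t = 0 := sq0 _ (by rw [ht, hx0]; ring)
        exact ⟨hx0, hy0, hz0, ht0⟩
    · -- t = 0
      have hz0 : z = 0 := sq0 _ (by rw [hz, ht0]; ring)
      have hy0 : y = 0 := sq0 _ (by rw [hy, ht0]; ring)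
      have hx0 : x = 0 := sq0 _ (by rw [hx, hy0]; ring)
      exact ⟨hx0, hy0, hz0, ht0⟩
  obtain ⟨hx0, hy0, hz0, ht0⟩ := hall
  apply ha
  funext i
  fin_cases i <;> simp only [Pi.zero_apply] <;> assumption
end

section
/- The cubic surface V(f) with f(x,y,z,t) = 3√15·x³ + 10(y³+z³+t³) - 3√15·x·y² - 6(√15·x + 5y)·z·t in P³(C) is nonsingular. -/
open MvPolynomial

theorem stmt17 (f : MvPolynomial (Fin 4) ℂ)
    (hf : f = MvPolynomial.C (3 * (Real.sqrt 15 : ℂ)) * MvPolynomial.X 0 ^ 3 +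
        MvPolynomial.C 10 * (MvPolynomial.X 1 ^ 3 + MvPolynomial.X 2 ^ 3 +
          MvPolynomial.X 3 ^ 3) -
        MvPolynomial.C (3 * (Real.sqrt 15 : ℂ)) * MvPolynomial.X 0 * MvPolynomial.X 1 ^ 2 -
        MvPolynomial.C 6 * (MvPolynomial.C (Real.sqrt 15 : ℂ) * MvPolynomial.X 0 +
          MvPolynomial.C 5 * MvPolynomial.X 1) * MvPolynomial.X 2 * MvPolynomial.X 3) :
    ¬ ∃ a : Fin 4 → ℂ, a ≠ 0 ∧
      ∀ i : Fin 4, MvPolynomial.eval a (MvPolynomial.pderiv i f) = 0 := by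
  rintro ⟨a, ha, h⟩
  apply ha
  have h0 := h 0; have h1 := h 1; have h2 := h 2; have h3 := h 3
  subst hf
  simp [pderiv_mul, pderiv_X, Pi.single_apply] at h0 h1 h2 h3
  set s : ℂ := (Real.sqrt 15 : ℂ) with hsdef
  set x := a 0; set y := a 1; set z := a 2; set t := a 3
  have hs : s ^ 2 = 15 := by
    rw [hsdef]
    norm_cast
    exact Real.sq_sqrt (by norm_num)
  have hsne : s ≠ 0 := by
    intro hc
    rw [hc] at hs
    norm_num at hs
  have key : (s * x + 5 * y) * (s * x - 3 * y) = 0 := by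
    linear_combination (s / 9) * h0 - (1 / 3) * h1 +
      ((1 / 3) * y ^ 2 + (2 / 3) * z * t) * hs
  have final : x = 0 ∧ y = 0 ∧ z = 0 ∧ t = 0 := by
    rcases mul_eq_zero.mp key with hu | hv
    · have hz2 : z ^ 2 = 0 := by linear_combination (1 / 30) * h2 + (t / 5) * hu
      have hz : z = 0 := by
        simpa using pow_eq_zero_iff (two_ne_zero) |>.mp hz2
      have ht2 : t ^ 2 = 0 := by linear_combination (1 / 30) * h3 + (z / 5) * hu
      have ht : t = 0 := by
        simpa using pow_eq_zero_iff (two_ne_zero) |>.mp ht2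
      have hy2 : y ^ 2 = 0 := by
        linear_combination (1 / 60) * h1 + (y / 10) * hu + (t / 2) * hz
      have hy : y = 0 := by
        simpa using pow_eq_zero_iff (two_ne_zero) |>.mp hy2
      have hx : x = 0 := by
        have : s * x = 0 := by linear_combination hu - 5 * hy
        rcases mul_eq_zero.mp this with hc | hc
        · exact absurd hc hsne
        · exact hc
      exact ⟨hx, hy, hz, ht⟩
    · have hF : 2 * y ^ 2 - 5 * (z * t) = 0 := by
        linear_combination (1 / 6) * h1 + y * hv
      have hG : 5 * z ^ 2 - 8 * y * t = 0 := by
        linear_combination (1 / 6) * h2 + t * hv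
      have hH : 5 * t ^ 2 - 8 * y * z = 0 := by
        linear_combination (1 / 6) * h3 + z * hv
      have hy4 : y ^ 4 = 0 := by
        linear_combination (-25 / 108 * t ^ 2) * hG + (-40 / 108 * y * t) * hH +
          ((5 / 108) * ((44 / 5) * y ^ 2 + 2 * y ^ 2 - 5 * z * t)) * hF
      have hy : y = 0 := by
        simpa using pow_eq_zero_iff (n := 4) (by norm_num) |>.mp hy4
      have hx : x = 0 := by
        have : s * x = 0 := by linear_combination hv + 3 * hy
        rcases mul_eq_zero.mp this with hc | hc
        · exact absurd hc hsne
        · exact hc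
      have hz2 : z ^ 2 = 0 := by linear_combination (1 / 5) * hG + (8 * t / 5) * hy
      have hz : z = 0 := by
        simpa using pow_eq_zero_iff (two_ne_zero) |>.mp hz2
      have ht2 : t ^ 2 = 0 := by linear_combination (1 / 5) * hH + (8 * z / 5) * hy
      have ht : t = 0 := by
        simpa using pow_eq_zero_iff (two_ne_zero) |>.mp ht2
      exact ⟨hx, hy, hz, ht⟩
  funext i
  fin_cases i
  · exact final.1
  · exact final.2.1
  · exact final.2.2.1
  · exact final.2.2.2
end
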